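/- arXiv:2507.16513 — 2 statements merged into one kernel-verified Lean document; each statement's English description precedes it below -/
import Mathlib

section
/- Let H be a real Hilbert space, R an injective operator with domain dom(R) ⊆ H mapping into H, U ⊆ dom(R), u⋆ ∈ dom(R), and y⋆ := Ru⋆. Then the scaled graph of R⁻¹ at y⋆ over R(U) is the image of the scaled graph of R at u⋆ over U under the Möbius inversion re^{iφ} ↦ (1/r)e^{iφ}: SG_{R(U),y⋆}(R⁻¹) = { z/|z|² : z ∈ SG_{U,u⋆}(R) }. -/
open ComplexConjugate
open scoped RealInnerProductSpace Pointwise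

/-- The point `(‖Δy‖/‖Δu‖)·e^{iθ}` with `θ = arccos(⟨Δu,Δy⟩/(‖Δu‖‖Δy‖)) ∈ [0,π]`
contributed to the SRG by a pair of increments `Δu`, `Δy` (equal to `0` when `Δy = 0`). -/
noncomputable def srgPoint {H : Type*} [NormedAddCommGroup H] [InnerProductSpace ℝ H]
    (du dy : H) : ℂ :=
  ((‖dy‖ / ‖du‖ : ℝ) : ℂ) *
    Complex.exp (Complex.I * ((Real.arccos (⟪du, dy⟫ / (‖du‖ * ‖dy‖)) : ℝ) : ℂ))

/-- The Scaled Relative Graph of an operator `R` on a real Hilbert space over a set `U` of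
inputs; both signs of the angle are included (via complex conjugation). -/
noncomputable def SRG {H : Type*} [NormedAddCommGroup H] [InnerProductSpace ℝ H]
    (R : H → H) (U : Set H) : Set ℂ :=
  { z | ∃ u₁ ∈ U, ∃ u₂ ∈ U, u₁ ≠ u₂ ∧
      (z = srgPoint (u₁ - u₂) (R u₁ - R u₂) ∨
        z = conj (srgPoint (u₁ - u₂) (R u₁ - R u₂))) }

/-- The Scaled Graph of an operator `R` at the particular input `us`, over a set `U` of inputs. -/
noncomputable def SG {H : Type*} [NormedAddCommGroup H] [InnerProductSpace ℝ H]
    (R : H → H) (U : Set H) (us : H) : Set ℂ :=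
  { z | ∃ u ∈ U, u ≠ us ∧
      (z = srgPoint (u - us) (R u - R us) ∨
        z = conj (srgPoint (u - us) (R u - R us))) }

/-- A set `C ⊆ ℂ` satisfies the chord property if for every `z ∈ C` the segment `[z, z̄]`
is contained in `C`. -/
def ChordProperty (C : Set ℂ) : Prop :=
  ∀ z ∈ C, ∀ α ∈ Set.Icc (0 : ℝ) 1, (α : ℂ) * z + ((1 - α : ℝ) : ℂ) * conj z ∈ C

/-- The right-hand arc `Arc⁺(z, z̄) = { r e^{i(1−2α)φ} : α ∈ [0,1] }`, where `z = r e^{iφ}`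
with `φ = arg z ∈ (−π, π]`. -/
noncomputable def arcPlus (z : ℂ) : Set ℂ :=
  { w | ∃ α ∈ Set.Icc (0 : ℝ) 1,
      w = ((‖z‖ : ℝ) : ℂ) *
        Complex.exp (Complex.I * (((1 - 2 * α) * Complex.arg z : ℝ) : ℂ)) }

/-- The left-hand arc `Arc⁻(z, z̄) = −Arc⁺(−z, −z̄)`. -/
noncomputable def arcMinus (z : ℂ) : Set ℂ := (fun w => -w) '' arcPlus (-z)

/-- `C` satisfies the right-arc property if `Arc⁺(z,z̄) ⊆ C` for all `z ∈ C`. -/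
def RightArcProperty (C : Set ℂ) : Prop := ∀ z ∈ C, arcPlus z ⊆ C

/-- `C` satisfies the left-arc property if `Arc⁻(z,z̄) ⊆ C` for all `z ∈ C`. -/
def LeftArcProperty (C : Set ℂ) : Prop := ∀ z ∈ C, arcMinus z ⊆ C

/-- `C` satisfies an arc property if it satisfies the left-arc or the right-arc property. -/
def ArcProperty (C : Set ℂ) : Prop := LeftArcProperty C ∨ RightArcProperty C

lemma srgPoint_inv {H : Type*} [NormedAddCommGroup H] [InnerProductSpace ℝ H]
    (du dy : H) (hdu : du ≠ 0) (hdy : dy ≠ 0) :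
    srgPoint dy du =
      srgPoint du dy / ((Complex.normSq (srgPoint du dy) : ℝ) : ℂ) := by
  have hθ : Real.arccos (⟪dy, du⟫ / (‖dy‖ * ‖du‖)) =
      Real.arccos (⟪du, dy⟫ / (‖du‖ * ‖dy‖)) := by
    rw [real_inner_comm, mul_comm]
  unfold srgPoint
  rw [hθ]
  set θ : ℝ := Real.arccos (⟪du, dy⟫ / (‖du‖ * ‖dy‖)) with hθdef
  have habs : ‖Complex.exp (Complex.I * (θ : ℂ))‖ = 1 := by
    rw [mul_comm, Complex.norm_exp_ofReal_mul_I]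
  have hns : Complex.normSq (((‖dy‖ / ‖du‖ : ℝ) : ℂ) *
      Complex.exp (Complex.I * (θ : ℂ))) = (‖dy‖ / ‖du‖) ^ 2 := by
    rw [← Complex.sq_norm, norm_mul, habs, mul_one, Complex.norm_real,
      Real.norm_of_nonneg (by positivity)]
  rw [hns]
  have hdu' : (0:ℝ) < ‖du‖ := norm_pos_iff.mpr hdu
  have hdy' : (0:ℝ) < ‖dy‖ := norm_pos_iff.mpr hdy
  have h1 : (‖du‖:ℂ) ≠ 0 := by exact_mod_cast hdu'.ne'
  have h2 : (‖dy‖:ℂ) ≠ 0 := by exact_mod_cast hdy'.ne'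
  rw [eq_div_iff (Complex.ofReal_ne_zero.mpr (by positivity))]
  push_cast
  field_simp

lemma conj_mobius (z : ℂ) :
    (starRingEnd ℂ) (z / ((Complex.normSq z : ℝ) : ℂ)) =
      (starRingEnd ℂ) z / ((Complex.normSq ((starRingEnd ℂ) z) : ℝ) : ℂ) := by
  rw [map_div₀, Complex.conj_ofReal, Complex.normSq_conj]

/-- for an injective operator `R` (with inverse `g`, i.e. `g (R u) = u` for all
`u`), `U ⊆ H`, `u⋆ ∈ H` and `y⋆ = R u⋆`, the scaled graph of `R⁻¹` at `y⋆` over `R(U)` is the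
image of `SG_{U,u⋆}(R)` under the Möbius inversion `z ↦ z/|z|²`. -/
theorem stmt8 {H : Type*} [NormedAddCommGroup H] [InnerProductSpace ℝ H]
    (R : H → H) (hR : Function.Injective R) (g : H → H) (hg : ∀ u, g (R u) = u)
    (U : Set H) (us : H) :
    SG g (R '' U) (R us) = (fun z => z / ((Complex.normSq z : ℝ) : ℂ)) '' SG R U us := by
  ext z
  constructor
  · rintro ⟨y, ⟨u, hu, rfl⟩, hne, hz⟩
    have hune : u ≠ us := fun h => hne (by rw [h])
    have hdu : u - us ≠ 0 := sub_ne_zero.mpr hune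
    have hdy : R u - R us ≠ 0 := sub_ne_zero.mpr (fun h => hune (hR h))
    rw [hg, hg] at hz
    have key := srgPoint_inv (u - us) (R u - R us) hdu hdy
    rcases hz with hz | hz
    · exact ⟨srgPoint (u - us) (R u - R us), ⟨u, hu, hune, Or.inl rfl⟩,
        by simp only; rw [← key, hz]⟩
    · refine ⟨(starRingEnd ℂ) (srgPoint (u - us) (R u - R us)),
        ⟨u, hu, hune, Or.inr rfl⟩, ?_⟩
      simp only
      rw [← conj_mobius, ← key, hz]
  · rintro ⟨w, ⟨u, hu, hune, hw⟩, rfl⟩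
    have hdu : u - us ≠ 0 := sub_ne_zero.mpr hune
    have hdy : R u - R us ≠ 0 := sub_ne_zero.mpr (fun h => hune (hR h))
    have key := srgPoint_inv (u - us) (R u - R us) hdu hdy
    refine ⟨R u, ⟨u, hu, rfl⟩, fun h => hune (hR h), ?_⟩
    rw [hg, hg]
    rcases hw with rfl | rfl
    · exact Or.inl (by simp only; rw [← key])
    · exact Or.inr (by simp only; rw [← conj_mobius, ← key])
end

section
/- Let H be a real Hilbert space, u⋆ ∈ H, U ⊆ H nonempty with u⋆ ∉ U, R an operator defined on U ∪ {u⋆} mapping into H, Y ⊆ H with R(U) ⊆ Y and Y ∖ {Ru⋆} nonempty, y⋆ := Ru⋆, and T an operator defined on Y ∪ {y⋆} mapping into H. If at least one of SG_{U,u⋆}(R), SG_{Y,y⋆}(T) satisfies an arc property (left-arc or right-arc), then SG_{U,u⋆}(T ∘ R) ⊆ SG_{Y,y⋆}(T) · SG_{U,u⋆}(R), where the right-hand side is the Minkowski product of subsets of ℂ. -/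
open ComplexConjugate
open scoped RealInnerProductSpace Pointwise

-- Auxiliary lemmas

section AngleTriangle

variable {H : Type*} [NormedAddCommGroup H] [InnerProductSpace ℝ H]

open InnerProductGeometry

private lemma arccos_le_arccos' {u v : ℝ} (h : u ≤ v) : Real.arccos v ≤ Real.arccos u := by
  rw [Real.arccos_eq_pi_div_two_sub_arcsin, Real.arccos_eq_pi_div_two_sub_arcsin]
  have := Real.monotone_arcsin h
  linarith

private lemma angle_triangle_aux (x y z : H) (hx : ‖x‖ = 1) (hy : ‖y‖ = 1) (hz : ‖z‖ = 1) :
    angle x z ≤ angle x y + angle y z := by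
  set a := ⟪x, y⟫ with ha
  set b := ⟪y, z⟫ with hb
  have ha1 : |a| ≤ 1 := by simpa [hx, hy] using abs_real_inner_le_norm x y
  have hb1 : |b| ≤ 1 := by simpa [hy, hz] using abs_real_inner_le_norm y z
  have ha1' := abs_le.1 ha1
  have hb1' := abs_le.1 hb1
  have hxy : angle x y = Real.arccos a := by rw [angle, hx, hy]; norm_num [ha]
  have hyz : angle y z = Real.arccos b := by rw [angle, hy, hz]; norm_num [hb]
  have hxz : angle x z = Real.arccos ⟪x, z⟫ := by rw [angle, hx, hz]; norm_num
  have hb2 : ⟪z, y⟫ = b := by rw [hb]; exact (real_inner_comm z y).symm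
  have inner_eq : ⟪x - a • y, z - b • y⟫ = ⟪x, z⟫ - a * b := by
    simp only [inner_sub_left, inner_sub_right, real_inner_smul_left, real_inner_smul_right,
      real_inner_self_eq_norm_sq, hy]
    rw [← ha, ← hb]
    ring
  have hnx : ‖x - a • y‖ = Real.sqrt (1 - a ^ 2) := by
    rw [← Real.sqrt_sq (norm_nonneg (x - a • y))]
    congr 1
    rw [norm_sub_sq_real, real_inner_smul_right, ← ha, norm_smul, hx, hy, Real.norm_eq_abs,
      mul_one, sq_abs]
    ring
  have hnz : ‖z - b • y‖ = Real.sqrt (1 - b ^ 2) := by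
    rw [← Real.sqrt_sq (norm_nonneg (z - b • y))]
    congr 1
    rw [norm_sub_sq_real, real_inner_smul_right, hb2, norm_smul, hz, hy, Real.norm_eq_abs,
      mul_one, sq_abs]
    ring
  have hlow : Real.cos (Real.arccos a + Real.arccos b) ≤ ⟪x, z⟫ := by
    rw [Real.cos_add, Real.cos_arccos ha1'.1 ha1'.2, Real.cos_arccos hb1'.1 hb1'.2,
      Real.sin_arccos, Real.sin_arccos]
    have h2 := abs_real_inner_le_norm (x - a • y) (z - b • y)
    rw [inner_eq, hnx, hnz] at h2
    have h3 := (abs_le.1 h2).1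
    linarith
  rw [hxz, hxy, hyz]
  by_cases hπ : Real.arccos a + Real.arccos b ≤ Real.pi
  · calc Real.arccos ⟪x, z⟫ ≤ Real.arccos (Real.cos (Real.arccos a + Real.arccos b)) :=
        arccos_le_arccos' hlow
      _ = Real.arccos a + Real.arccos b :=
        Real.arccos_cos (add_nonneg (Real.arccos_nonneg _) (Real.arccos_nonneg _)) hπ
  · exact le_trans (Real.arccos_le_pi _) (le_of_not_ge hπ)

lemma angle_triangle' (x y z : H) : angle x z ≤ angle x y + angle y z := by
  by_cases hx : x = 0
  · subst hx
    rw [angle_zero_left, angle_zero_left]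
    linarith [angle_nonneg y z]
  by_cases hz : z = 0
  · subst hz
    rw [angle_zero_right, angle_zero_right]
    linarith [angle_nonneg x y]
  by_cases hy : y = 0
  · subst hy
    rw [angle_zero_right, angle_zero_left]
    linarith [angle_le_pi x z]
  have hx' : (0:ℝ) < ‖x‖⁻¹ := inv_pos.2 (norm_pos_iff.2 hx)
  have hy' : (0:ℝ) < ‖y‖⁻¹ := inv_pos.2 (norm_pos_iff.2 hy)
  have hz' : (0:ℝ) < ‖z‖⁻¹ := inv_pos.2 (norm_pos_iff.2 hz)
  have e1 : angle x z = angle (‖x‖⁻¹ • x) (‖z‖⁻¹ • z) := by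
    rw [angle_smul_left_of_pos _ _ hx', angle_smul_right_of_pos _ _ hz']
  have e2 : angle x y = angle (‖x‖⁻¹ • x) (‖y‖⁻¹ • y) := by
    rw [angle_smul_left_of_pos _ _ hx', angle_smul_right_of_pos _ _ hy']
  have e3 : angle y z = angle (‖y‖⁻¹ • y) (‖z‖⁻¹ • z) := by
    rw [angle_smul_left_of_pos _ _ hy', angle_smul_right_of_pos _ _ hz']
  rw [e1, e2, e3]
  exact angle_triangle_aux _ _ _ (norm_smul_inv_norm hx) (norm_smul_inv_norm hy)
    (norm_smul_inv_norm hz)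

end AngleTriangle

section ComplexHelpers

lemma abs_coe_mul_exp {b : ℝ} (hb : 0 ≤ b) (t : ℝ) :
    ‖(b : ℂ) * Complex.exp (Complex.I * (t : ℂ))‖ = b := by
  rw [norm_mul, Complex.norm_real, Real.norm_eq_abs, abs_of_nonneg hb, mul_comm Complex.I,
    Complex.norm_exp_ofReal_mul_I, mul_one]

lemma arg_coe_mul_exp {b t : ℝ} (hb : 0 < b) (ht : t ∈ Set.Ioc (-Real.pi) Real.pi) :
    ((b : ℂ) * Complex.exp (Complex.I * (t : ℂ))).arg = t := by
  rw [mul_comm Complex.I, Complex.exp_mul_I, Complex.arg_real_mul _ hb,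
    Complex.arg_cos_add_sin_mul_I ht]

lemma exp_I_mul_add (s t : ℝ) :
    Complex.exp (Complex.I * (s : ℂ)) * Complex.exp (Complex.I * (t : ℂ)) =
      Complex.exp (Complex.I * ((s + t : ℝ) : ℂ)) := by
  rw [← Complex.exp_add]
  congr 1
  push_cast
  ring

lemma neg_exp_I_mul (t : ℝ) :
    -Complex.exp (Complex.I * (t : ℂ)) = Complex.exp (Complex.I * ((t + Real.pi : ℝ) : ℂ)) := by
  rw [← exp_I_mul_add, mul_comm Complex.I (Real.pi : ℂ), Complex.exp_pi_mul_I]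
  ring

lemma conj_coe_mul_exp (c t : ℝ) :
    conj ((c : ℂ) * Complex.exp (Complex.I * (t : ℂ))) =
      (c : ℂ) * Complex.exp (Complex.I * ((-t : ℝ) : ℂ)) := by
  rw [map_mul, ← Complex.exp_conj, Complex.conj_ofReal]
  congr 1
  simp [Complex.conj_I]

lemma mem_arcPlus_of {b t φ : ℝ} (hb : 0 < b) (ht : t ∈ Set.Ioc (-Real.pi) Real.pi)
    {z : ℂ} (hz : z = (b : ℂ) * Complex.exp (Complex.I * (t : ℂ)))
    (α : ℝ) (hα : α ∈ Set.Icc (0 : ℝ) 1) (hφ : φ = (1 - 2 * α) * t) :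
    (b : ℂ) * Complex.exp (Complex.I * (φ : ℂ)) ∈ arcPlus z := by
  refine ⟨α, hα, ?_⟩
  rw [hz, abs_coe_mul_exp hb.le, arg_coe_mul_exp hb ht, ← hφ]

end ComplexHelpers
section KeyLemma

lemma key_decomp {a b θ1 θ2 θ3 : ℝ} (ha : 0 ≤ a) (hb : 0 < b)
    (h1l : 0 ≤ θ1) (h1u : θ1 ≤ Real.pi) (h2l : 0 ≤ θ2) (h2u : θ2 ≤ Real.pi)
    (h3l : 0 ≤ θ3) (h3u : θ3 ≤ Real.pi)
    (t3 : θ3 ≤ θ1 + θ2) (t1 : θ1 ≤ θ2 + θ3) (t2 : θ2 ≤ θ1 + θ3)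
    (tsum : θ1 + θ2 + θ3 ≤ 2 * Real.pi)
    {A B : Set ℂ}
    (hA : (b : ℂ) * Complex.exp (Complex.I * (θ1 : ℂ)) ∈ A)
    (hB1 : (a : ℂ) * Complex.exp (Complex.I * (θ2 : ℂ)) ∈ B)
    (hB2 : (a : ℂ) * Complex.exp (Complex.I * ((-θ2 : ℝ) : ℂ)) ∈ B)
    (harc : ArcProperty A) :
    ((a * b : ℝ) : ℂ) * Complex.exp (Complex.I * (θ3 : ℂ)) ∈ B * A := by
  have hπ := Real.pi_pos
  rcases eq_or_lt_of_le h1l with h1z | h1p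
  · -- θ1 = 0 : then θ2 = θ3, no arc needed
    have h23 : θ2 = θ3 := le_antisymm (by linarith) (by linarith)
    have hkey : ((a * b : ℝ) : ℂ) * Complex.exp (Complex.I * (θ3 : ℂ)) =
        ((a : ℂ) * Complex.exp (Complex.I * (θ2 : ℂ))) *
          ((b : ℂ) * Complex.exp (Complex.I * (θ1 : ℂ))) := by
      rw [mul_mul_mul_comm, exp_I_mul_add, show (θ2 + θ1 : ℝ) = θ3 by linarith]
      push_cast; ring
    rw [hkey]; exact Set.mul_mem_mul hB1 hA
  rcases harc with hL | hR
  · -- left-arc property on A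
    obtain ⟨α, hαmem, hφ'⟩ : ∃ α ∈ Set.Icc (0:ℝ) 1,
        θ3 + θ2 - Real.pi = (1 - 2 * α) * (θ1 - Real.pi) := by
      rcases eq_or_lt_of_le h1u with h1π | h1π
      · refine ⟨1/2, ⟨by norm_num, by norm_num⟩, ?_⟩
        have h23 : θ2 + θ3 = Real.pi := le_antisymm (by linarith) (by linarith)
        norm_num; linarith
      · have hd : θ1 - Real.pi < 0 := by linarith
        set q : ℝ := (θ3 + θ2 - Real.pi) / (θ1 - Real.pi) with hqdef
        have habs : |θ3 + θ2 - Real.pi| ≤ Real.pi - θ1 := abs_le.2 ⟨by linarith, by linarith⟩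
        have hq1 : |q| ≤ 1 := by
          rw [hqdef, abs_div, div_le_one (abs_pos.2 (ne_of_lt hd))]
          rw [abs_of_neg hd]; linarith
        have hq' := abs_le.1 hq1
        refine ⟨(1 - q)/2, ⟨by linarith, by linarith⟩, ?_⟩
        have hsimp : (1 - 2 * ((1 - q)/2)) = q := by ring
        rw [hsimp, hqdef, div_mul_cancel₀ _ (ne_of_lt hd)]
    have hnegz : -((b : ℂ) * Complex.exp (Complex.I * (θ1 : ℂ))) =
        (b : ℂ) * Complex.exp (Complex.I * ((θ1 - Real.pi : ℝ) : ℂ)) := by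
      have h := neg_exp_I_mul (θ1 - Real.pi)
      rw [show (θ1 - Real.pi + Real.pi : ℝ) = θ1 by ring] at h
      rw [← h]; ring
    have harcmem : (b : ℂ) * Complex.exp (Complex.I * ((θ3 + θ2 : ℝ) : ℂ)) ∈
        arcMinus ((b : ℂ) * Complex.exp (Complex.I * (θ1 : ℂ))) := by
      unfold arcMinus
      refine ⟨(b : ℂ) * Complex.exp (Complex.I * ((θ3 + θ2 - Real.pi : ℝ) : ℂ)),
        mem_arcPlus_of hb ⟨by linarith, by linarith⟩ hnegz α hαmem hφ', ?_⟩
      have h := neg_exp_I_mul (θ3 + θ2 - Real.pi)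
      rw [show (θ3 + θ2 - Real.pi + Real.pi : ℝ) = θ3 + θ2 by ring] at h
      show -((b : ℂ) * Complex.exp (Complex.I * ((θ3 + θ2 - Real.pi : ℝ) : ℂ))) = _
      rw [← h]; ring
    have hkey : ((a * b : ℝ) : ℂ) * Complex.exp (Complex.I * (θ3 : ℂ)) =
        ((a : ℂ) * Complex.exp (Complex.I * ((-θ2 : ℝ) : ℂ))) *
          ((b : ℂ) * Complex.exp (Complex.I * ((θ3 + θ2 : ℝ) : ℂ))) := by
      rw [mul_mul_mul_comm, exp_I_mul_add, show (-θ2 + (θ3 + θ2) : ℝ) = θ3 by ring]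
      push_cast; ring
    rw [hkey]; exact Set.mul_mem_mul hB2 (hL _ hA harcmem)
  · -- right-arc property on A
    set q : ℝ := (θ3 - θ2) / θ1 with hqdef
    have hq1 : |q| ≤ 1 := by
      rw [hqdef, abs_div, div_le_one (abs_pos.2 (ne_of_gt h1p))]
      rw [abs_of_pos h1p]
      exact abs_le.2 ⟨by linarith, by linarith⟩
    have hq' := abs_le.1 hq1
    have hαmem : (1 - q)/2 ∈ Set.Icc (0:ℝ) 1 := ⟨by linarith, by linarith⟩
    have hφ : θ3 - θ2 = (1 - 2 * ((1 - q)/2)) * θ1 := by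
      have hsimp : (1 - 2 * ((1 - q)/2)) = q := by ring
      rw [hsimp, hqdef, div_mul_cancel₀ _ (ne_of_gt h1p)]
    have hmem : (b : ℂ) * Complex.exp (Complex.I * ((θ3 - θ2 : ℝ) : ℂ)) ∈ A :=
      hR _ hA (mem_arcPlus_of hb ⟨by linarith, h1u⟩ rfl _ hαmem hφ)
    have hkey : ((a * b : ℝ) : ℂ) * Complex.exp (Complex.I * (θ3 : ℂ)) =
        ((a : ℂ) * Complex.exp (Complex.I * (θ2 : ℂ))) *
          ((b : ℂ) * Complex.exp (Complex.I * ((θ3 - θ2 : ℝ) : ℂ))) := by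
      rw [mul_mul_mul_comm, exp_I_mul_add, show (θ2 + (θ3 - θ2) : ℝ) = θ3 by ring]
      push_cast; ring
    rw [hkey]; exact Set.mul_mem_mul hB1 hmem

end KeyLemma

section SGHelpers

variable {H : Type*} [NormedAddCommGroup H] [InnerProductSpace ℝ H]

lemma srgPoint_eq_angle (du dy : H) :
    srgPoint du dy = ((‖dy‖ / ‖du‖ : ℝ) : ℂ) *
      Complex.exp (Complex.I * ((InnerProductGeometry.angle du dy : ℝ) : ℂ)) := rfl

lemma srgPoint_zero (du : H) : srgPoint du 0 = 0 := by
  simp [srgPoint]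

lemma mem_SG {R : H → H} {U : Set H} {us u : H} (hu : u ∈ U) (hne : u ≠ us) :
    srgPoint (u - us) (R u - R us) ∈ SG R U us := ⟨u, hu, hne, Or.inl rfl⟩

lemma conj_mem_SG {R : H → H} {U : Set H} {us : H} {z : ℂ} (h : z ∈ SG R U us) :
    conj z ∈ SG R U us := by
  obtain ⟨u, hu, hne, h | h⟩ := h
  · exact ⟨u, hu, hne, Or.inr (by rw [h])⟩
  · exact ⟨u, hu, hne, Or.inl (by rw [h, Complex.conj_conj])⟩

lemma conj_mem_mul_SG {A B : Set ℂ} (hA : ∀ z ∈ A, conj z ∈ A) (hB : ∀ z ∈ B, conj z ∈ B)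
    {z : ℂ} (h : z ∈ A * B) : conj z ∈ A * B := by
  obtain ⟨x, hx, y, hy, rfl⟩ := h
  exact ⟨conj x, hA x hx, conj y, hB y hy, (map_mul (starRingEnd ℂ) x y).symm⟩

open InnerProductGeometry in
lemma main_case {A B : Set ℂ} (du dy dz : H) (hdu : du ≠ 0) (hdy : dy ≠ 0) (hdz : dz ≠ 0)
    (hA1 : srgPoint du dy ∈ A) (hA2 : conj (srgPoint du dy) ∈ A)
    (hB1 : srgPoint dy dz ∈ B) (hB2 : conj (srgPoint dy dz) ∈ B)
    (harc : ArcProperty A ∨ ArcProperty B) :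
    srgPoint du dz ∈ B * A := by
  have hbpos : (0:ℝ) < ‖dy‖ / ‖du‖ := div_pos (norm_pos_iff.2 hdy) (norm_pos_iff.2 hdu)
  have hapos : (0:ℝ) < ‖dz‖ / ‖dy‖ := div_pos (norm_pos_iff.2 hdz) (norm_pos_iff.2 hdy)
  have hab : (‖dz‖ / ‖dy‖) * (‖dy‖ / ‖du‖) = ‖dz‖ / ‖du‖ := by
    rw [div_mul_div_comm, mul_comm ‖dy‖ ‖du‖]
    exact mul_div_mul_right _ _ (norm_ne_zero_iff.2 hdy)
  -- triangle inequalities for angles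
  have t3 : angle du dz ≤ angle du dy + angle dy dz := angle_triangle' du dy dz
  have t1 : angle du dy ≤ angle dy dz + angle du dz := by
    have h := angle_triangle' du dz dy
    rw [angle_comm dz dy] at h
    linarith
  have t2 : angle dy dz ≤ angle du dy + angle du dz := by
    have h := angle_triangle' dy du dz
    rw [angle_comm dy du] at h
    linarith
  have tsum : angle du dy + angle dy dz + angle du dz ≤ 2 * Real.pi := by
    have h := angle_triangle' du (-dy) dz
    rw [angle_neg_right, angle_neg_left] at h
    linarith
  rw [srgPoint_eq_angle du dy] at hA1
  rw [srgPoint_eq_angle du dy, conj_coe_mul_exp] at hA2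
  rw [srgPoint_eq_angle dy dz] at hB1
  rw [srgPoint_eq_angle dy dz, conj_coe_mul_exp] at hB2
  rw [srgPoint_eq_angle du dz, ← hab]
  rcases harc with harcA | harcB
  · exact key_decomp hapos.le hbpos (angle_nonneg du dy) (angle_le_pi du dy)
      (angle_nonneg dy dz) (angle_le_pi dy dz) (angle_nonneg du dz) (angle_le_pi du dz)
      t3 t1 t2 tsum hA1 hB1 hB2 harcA
  · have h := key_decomp hbpos.le hapos (angle_nonneg dy dz) (angle_le_pi dy dz)
      (angle_nonneg du dy) (angle_le_pi du dy) (angle_nonneg du dz) (angle_le_pi du dz)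
      (by linarith) (by linarith) (by linarith) (by linarith) hB1 hA1 hA2 harcB
    rwa [mul_comm (‖dy‖ / ‖du‖) (‖dz‖ / ‖dy‖), mul_comm A B] at h

end SGHelpers

/-- scaled-graph series rule. If `U` is nonempty with `u⋆ ∉ U`, `R(U) ⊆ Y`,
`Y ∖ {Ru⋆}` is nonempty, and at least one of `SG_{U,u⋆}(R)`, `SG_{Y,y⋆}(T)` (with `y⋆ = Ru⋆`)
satisfies an arc property, then `SG_{U,u⋆}(T∘R) ⊆ SG_{Y,y⋆}(T)·SG_{U,u⋆}(R)`. -/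
theorem stmt9 {H : Type*} [NormedAddCommGroup H] [InnerProductSpace ℝ H]
    (us : H) (U Y : Set H) (hUne : U.Nonempty) (husU : us ∉ U)
    (R T : H → H) (hmaps : Set.MapsTo R U Y) (hYne : (Y \ {R us}).Nonempty)
    (harc : ArcProperty (SG R U us) ∨ ArcProperty (SG T Y (R us))) :
    SG (T ∘ R) U us ⊆ SG T Y (R us) * SG R U us := by
  intro z hz
  obtain ⟨u, hu, hne, hcase⟩ := hz
  have hp : srgPoint (u - us) ((T ∘ R) u - (T ∘ R) us) ∈ SG T Y (R us) * SG R U us := by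
    simp only [Function.comp_apply]
    by_cases hdy0 : R u - R us = 0
    · -- R u = R us : everything degenerates to 0
      have hRu : R u = R us := sub_eq_zero.1 hdy0
      rw [hRu, sub_self, srgPoint_zero]
      obtain ⟨y, hyY, hyne⟩ := hYne
      have hw : srgPoint (y - R us) (T y - T (R us)) ∈ SG T Y (R us) := mem_SG hyY hyne
      have hr : (0 : ℂ) ∈ SG R U us := by
        have h := mem_SG (R := R) hu hne
        rwa [hdy0, srgPoint_zero] at h
      exact ⟨_, hw, 0, hr, mul_zero _⟩
    · have hdu0 : u - us ≠ 0 := sub_ne_zero.2 hne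
      have hRune : R u ≠ R us := fun h => hdy0 (by rw [h, sub_self])
      have hRuY : R u ∈ Y := hmaps hu
      by_cases hdz0 : T (R u) - T (R us) = 0
      · rw [hdz0, srgPoint_zero]
        have hw : (0 : ℂ) ∈ SG T Y (R us) := by
          have h := mem_SG (R := T) hRuY hRune
          rwa [hdz0, srgPoint_zero] at h
        exact ⟨0, hw, _, mem_SG hu hne, zero_mul _⟩
      · exact main_case (u - us) (R u - R us) (T (R u) - T (R us)) hdu0 hdy0 hdz0
          (mem_SG hu hne) (conj_mem_SG (mem_SG hu hne))
          (mem_SG hRuY hRune) (conj_mem_SG (mem_SG hRuY hRune)) harc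
  rcases hcase with rfl | rfl
  · exact hp
  · exact conj_mem_mul_SG (fun _ h => conj_mem_SG h) (fun _ h => conj_mem_SG h) hp
end
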